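/- arXiv:1903.06898 — 3 statements merged into one kernel-verified Lean document; each statement's English description precedes it below -/
import Mathlib

section
/- Let c, n > 0, p ≥ 1, and f(x) = (cn - x²)^{-p}. For x, η ∈ ℝ with |η| ≤ 1 and cn - (|x|+1)² ≥ (cn - x²)/2 > 0, we have f(x+η) - f(x) ≤ 2p·x·(cn - x²)^{-(p+1)}·η + 2^{p+3}·p(p+1)·cn·(cn - x²)^{-(p+2)}. -/
/-- Taylor-type bound: for `f x = (cn - x²)^{-p}`, `|η| ≤ 1` and the gap condition
`cn - (|x|+1)² ≥ (cn - x²)/2 > 0`, we have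
`f(x+η) - f(x) ≤ 2 p x (cn-x²)^{-(p+1)} η + 2^{p+3} p (p+1) cn (cn-x²)^{-(p+2)}`. -/
theorem stmt4 (c n p : ℝ) (hc : 0 < c) (hn : 0 < n) (hp : 1 ≤ p)
    (f : ℝ → ℝ) (hf : ∀ x, f x = (c * n - x ^ 2) ^ (-p))
    (x η : ℝ) (hη : |η| ≤ 1)
    (hgap : c * n - (|x| + 1) ^ 2 ≥ (c * n - x ^ 2) / 2)
    (hpos : 0 < (c * n - x ^ 2) / 2) :
    f (x + η) - f x ≤
      2 * p * x * (c * n - x ^ 2) ^ (-(p + 1)) * η +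
        2 ^ (p + 3) * p * (p + 1) * (c * n) * (c * n - x ^ 2) ^ (-(p + 2)) := by
  have hfe : f = fun z => (c * n - z ^ 2) ^ (-p : ℝ) := funext hf
  subst hfe
  beta_reduce
  set D : ℝ := c * n - x ^ 2 with hDdef
  clear_value D
  have hDpos : 0 < D := by linarith
  have hDle : D ≤ c * n := by nlinarith [sq_nonneg x]
  -- good region
  have hA : ∀ t : ℝ, t ∈ Set.Icc (-1:ℝ) 1 → D / 2 ≤ c * n - (x + t) ^ 2 := by
    intro t ht
    obtain ⟨ht1, ht2⟩ := Set.mem_Icc.mp ht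
    have h1 : |x + t| ≤ |x| + 1 := by
      calc |x + t| ≤ |x| + |t| := abs_add_le x t
        _ ≤ |x| + 1 := by have := abs_le.mpr ⟨ht1, ht2⟩; linarith
    have h2 : (x + t) ^ 2 ≤ (|x| + 1) ^ 2 := by
      rw [← sq_abs (x + t)]
      exact pow_le_pow_left₀ (abs_nonneg _) h1 2
    linarith
  have hApos : ∀ t : ℝ, t ∈ Set.Icc (-1:ℝ) 1 → 0 < c * n - (x + t) ^ 2 := fun t ht =>
    lt_of_lt_of_le hpos (hA t ht)
  have hsq : ∀ t : ℝ, t ∈ Set.Icc (-1:ℝ) 1 → (x + t) ^ 2 ≤ c * n - D / 2 := fun t ht => by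
    have := hA t ht; linarith
  -- first derivative
  set F' : ℝ → ℝ := fun y => 2 * p * y * (c * n - y ^ 2) ^ (-p - 1) with hF'def
  clear_value F'
  have hf' : ∀ y : ℝ, 0 < c * n - y ^ 2 →
      HasDerivAt (fun z => (c * n - z ^ 2) ^ (-p : ℝ)) (F' y) y := by
    intro y hy
    have h1 : HasDerivAt (fun z : ℝ => c * n - z ^ 2) (-(2 * y)) y := by
      simpa using ((hasDerivAt_pow 2 y).const_sub (c * n))
    have h2 : HasDerivAt (fun z : ℝ => z ^ (-p : ℝ))
        (-p * (c * n - y ^ 2) ^ (-p - 1)) (c * n - y ^ 2) :=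
      Real.hasDerivAt_rpow_const (Or.inl hy.ne')
    have h3 := h2.comp y h1
    refine h3.congr_deriv ?_
    simp only [hF'def]; ring
  -- second derivative
  set F'' : ℝ → ℝ := fun y =>
    2 * p * (c * n - y ^ 2) ^ (-p - 1) + 4 * p * (p + 1) * y ^ 2 * (c * n - y ^ 2) ^ (-p - 2)
    with hF''def
  clear_value F''
  have hf'' : ∀ y : ℝ, 0 < c * n - y ^ 2 → HasDerivAt F' (F'' y) y := by
    intro y hy
    have h1 : HasDerivAt (fun z : ℝ => c * n - z ^ 2) (-(2 * y)) y := by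
      simpa using ((hasDerivAt_pow 2 y).const_sub (c * n))
    have h2 : HasDerivAt (fun z : ℝ => z ^ (-p - 1 : ℝ))
        ((-p - 1) * (c * n - y ^ 2) ^ (-p - 1 - 1)) (c * n - y ^ 2) :=
      Real.hasDerivAt_rpow_const (Or.inl hy.ne')
    have h3 := h2.comp y h1
    have h4 : HasDerivAt (fun z : ℝ => 2 * p * z) (2 * p) y := by
      simpa using (hasDerivAt_id y).const_mul (2 * p)
    have h5 := h4.mul h3
    rw [hF'def]
    refine h5.congr_deriv ?_
    have he : (-p - 1 - 1 : ℝ) = -p - 2 := by ring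
    simp only [hF''def, he, Function.comp_apply]
    ring
  -- bound on second derivative
  set M : ℝ := 2 * p * (D / 2) ^ (-p - 1) + 4 * p * (p + 1) * (c * n - D / 2) * (D / 2) ^ (-p - 2)
    with hMdef
  clear_value M
  have hM : ∀ t : ℝ, t ∈ Set.Icc (-1:ℝ) 1 → F'' (x + t) ≤ M := by
    intro t ht
    have hu : 0 < c * n - (x + t) ^ 2 := hApos t ht
    have hr1 : (c * n - (x + t) ^ 2) ^ (-p - 1 : ℝ) ≤ (D / 2) ^ (-p - 1 : ℝ) :=
      Real.rpow_le_rpow_of_nonpos hpos (hA t ht) (by linarith)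
    have hr2 : (c * n - (x + t) ^ 2) ^ (-p - 2 : ℝ) ≤ (D / 2) ^ (-p - 2 : ℝ) :=
      Real.rpow_le_rpow_of_nonpos hpos (hA t ht) (by linarith)
    have hx2 : (x + t) ^ 2 ≤ c * n - D / 2 := hsq t ht
    have hB1 : 0 ≤ (c * n - (x + t) ^ 2) ^ (-p - 2 : ℝ) := Real.rpow_nonneg hu.le _
    have h1 : 2 * p * (c * n - (x + t) ^ 2) ^ (-p - 1 : ℝ) ≤ 2 * p * (D / 2) ^ (-p - 1 : ℝ) := by
      have : (0:ℝ) ≤ 2 * p := by linarith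
      exact mul_le_mul_of_nonneg_left hr1 this
    have h2 : (x + t) ^ 2 * (c * n - (x + t) ^ 2) ^ (-p - 2 : ℝ) ≤
        (c * n - D / 2) * (D / 2) ^ (-p - 2 : ℝ) :=
      mul_le_mul hx2 hr2 hB1 (by nlinarith [sq_nonneg (x + t)])
    have h3 : 4 * p * (p + 1) * ((x + t) ^ 2 * (c * n - (x + t) ^ 2) ^ (-p - 2 : ℝ)) ≤
        4 * p * (p + 1) * ((c * n - D / 2) * (D / 2) ^ (-p - 2 : ℝ)) := by
      have : (0:ℝ) ≤ 4 * p * (p + 1) := by nlinarith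
      exact mul_le_mul_of_nonneg_left h2 this
    simp only [hF''def, hMdef]
    nlinarith [h1, h3]
  have hMnonneg : 0 ≤ M := by
    have h1 : (0:ℝ) ≤ (D / 2) ^ (-p - 1 : ℝ) := Real.rpow_nonneg hpos.le _
    have h2 : (0:ℝ) ≤ (D / 2) ^ (-p - 2 : ℝ) := Real.rpow_nonneg hpos.le _
    have h3 : (0:ℝ) ≤ c * n - D / 2 := by nlinarith [sq_nonneg (|x| + 1)]
    have hp0 : (0:ℝ) ≤ p := by linarith
    rw [hMdef]
    positivity
  -- the auxiliary function g and its derivative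
  set g : ℝ → ℝ := fun t => (c * n - (x + t) ^ 2) ^ (-p : ℝ) - D ^ (-p : ℝ)
      - F' x * t - M / 2 * t ^ 2 with hgdef
  clear_value g
  set g' : ℝ → ℝ := fun t => F' (x + t) - F' x - M * t with hg'def
  clear_value g'
  have hshift : ∀ t : ℝ, HasDerivAt (fun s : ℝ => x + s) 1 t := fun t => by
    simpa using (hasDerivAt_id t).const_add x
  have hg : ∀ t : ℝ, t ∈ Set.Icc (-1:ℝ) 1 → HasDerivAt g (g' t) t := by
    intro t ht
    have h1 := (hf' (x + t) (hApos t ht)).comp t (hshift t)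
    have h2 : HasDerivAt (fun s : ℝ => F' x * s) (F' x) t := by
      simpa using (hasDerivAt_id t).const_mul (F' x)
    have h3 : HasDerivAt (fun s : ℝ => M / 2 * s ^ 2) (M / 2 * (2 * t)) t := by
      simpa using (hasDerivAt_pow 2 t).const_mul (M / 2)
    have h4 := ((h1.sub_const (D ^ (-p : ℝ))).sub h2).sub h3
    rw [hgdef]
    refine h4.congr_deriv ?_
    simp only [hg'def]; ring
  have hgd : ∀ t : ℝ, t ∈ Set.Icc (-1:ℝ) 1 → HasDerivAt g' (F'' (x + t) - M) t := by
    intro t ht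
    have h1 := (hf'' (x + t) (hApos t ht)).comp t (hshift t)
    have h2 : HasDerivAt (fun s : ℝ => M * s) M t := by
      simpa using (hasDerivAt_id t).const_mul M
    have h4 := (h1.sub_const (F' x)).sub h2
    rw [hg'def]
    refine h4.congr_deriv ?_
    ring
  -- g' is antitone on Icc (-1) 1
  have hanti : AntitoneOn g' (Set.Icc (-1:ℝ) 1) := by
    apply antitoneOn_of_deriv_nonpos (convex_Icc _ _)
    · exact fun t ht => (hgd t ht).continuousAt.continuousWithinAt
    · intro t ht
      rw [interior_Icc] at ht
      exact ((hgd t (Set.Ioo_subset_Icc_self ht)).differentiableAt).differentiableWithinAt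
    · intro t ht
      rw [interior_Icc] at ht
      rw [(hgd t (Set.Ioo_subset_Icc_self ht)).deriv]
      have := hM t (Set.Ioo_subset_Icc_self ht)
      linarith
  have hg'0 : g' 0 = 0 := by simp [hg'def]
  have hη' : -1 ≤ η ∧ η ≤ 1 := abs_le.mp hη
  have hg0 : g 0 = 0 := by simp [hgdef, ← hDdef]
  -- key inequality : g η ≤ 0
  have hkey : g η ≤ 0 := by
    rcases le_or_gt 0 η with h0 | h0
    · -- g antitone on Icc 0 η
      have hsub : Set.Icc (0:ℝ) η ⊆ Set.Icc (-1:ℝ) 1 :=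
        Set.Icc_subset_Icc (by linarith) hη'.2
      have : AntitoneOn g (Set.Icc (0:ℝ) η) := by
        apply antitoneOn_of_deriv_nonpos (convex_Icc _ _)
        · exact fun t ht => (hg t (hsub ht)).continuousAt.continuousWithinAt
        · intro t ht
          have ht' : t ∈ Set.Icc (0:ℝ) η := interior_subset ht
          exact ((hg t (hsub ht')).differentiableAt).differentiableWithinAt
        · intro t ht
          have ht' : t ∈ Set.Icc (0:ℝ) η := interior_subset ht
          rw [(hg t (hsub ht')).deriv]
          have h01 : (0:ℝ) ∈ Set.Icc (-1:ℝ) 1 := by constructor <;> norm_num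
          have := hanti h01 (hsub ht') ht'.1
          linarith [hg'0 ▸ this]
      have := this (Set.left_mem_Icc.mpr h0) (Set.right_mem_Icc.mpr h0) h0
      linarith [hg0 ▸ this]
    · -- g monotone on Icc η 0
      have hsub : Set.Icc η (0:ℝ) ⊆ Set.Icc (-1:ℝ) 1 :=
        Set.Icc_subset_Icc hη'.1 (by linarith)
      have : MonotoneOn g (Set.Icc η (0:ℝ)) := by
        apply monotoneOn_of_deriv_nonneg (convex_Icc _ _)
        · exact fun t ht => (hg t (hsub ht)).continuousAt.continuousWithinAt
        · intro t ht
          have ht' : t ∈ Set.Icc η (0:ℝ) := interior_subset ht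
          exact ((hg t (hsub ht')).differentiableAt).differentiableWithinAt
        · intro t ht
          have ht' : t ∈ Set.Icc η (0:ℝ) := interior_subset ht
          rw [(hg t (hsub ht')).deriv]
          have h01 : (0:ℝ) ∈ Set.Icc (-1:ℝ) 1 := by constructor <;> norm_num
          have := hanti (hsub ht') h01 ht'.2
          linarith [hg'0 ▸ this]
      have := this (Set.left_mem_Icc.mpr h0.le) (Set.right_mem_Icc.mpr h0.le) h0.le
      linarith [hg0 ▸ this]
  -- unfold g η ≤ 0
  rw [hgdef] at hkey
  beta_reduce at hkey
  have hmain : (c * n - (x + η) ^ 2) ^ (-p : ℝ) - D ^ (-p : ℝ) ≤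
      F' x * η + M / 2 * η ^ 2 := by linarith only [hkey]
  have hη2 : η ^ 2 ≤ 1 := by
    rw [← sq_abs]
    exact pow_le_one₀ (abs_nonneg η) hη
  have hmain2 : (c * n - (x + η) ^ 2) ^ (-p : ℝ) - D ^ (-p : ℝ) ≤
      F' x * η + M / 2 := by
    have h5 : M / 2 * η ^ 2 ≤ M / 2 := by
      have h6 := mul_le_mul_of_nonneg_left hη2 (by linarith only [hMnonneg] : (0:ℝ) ≤ M / 2)
      linarith only [h6]
    linarith only [hmain, h5]
  -- rpow algebra
  have e1 : (D / 2) ^ (-p - 1 : ℝ) = 2 ^ (p + 1 : ℝ) * D ^ (-p - 1 : ℝ) := by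
    rw [Real.div_rpow hDpos.le (by norm_num), show (-p - 1 : ℝ) = -(p + 1) by ring,
      Real.rpow_neg (by norm_num : (0:ℝ) ≤ 2), div_inv_eq_mul]
    ring
  have e2 : (D / 2) ^ (-p - 2 : ℝ) = 2 ^ (p + 2 : ℝ) * D ^ (-p - 2 : ℝ) := by
    rw [Real.div_rpow hDpos.le (by norm_num), show (-p - 2 : ℝ) = -(p + 2) by ring,
      Real.rpow_neg (by norm_num : (0:ℝ) ≤ 2), div_inv_eq_mul]
    ring
  have e3 : D * D ^ (-p - 2 : ℝ) = D ^ (-p - 1 : ℝ) := by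
    rw [show (-p - 1 : ℝ) = 1 + (-p - 2) by ring, Real.rpow_add hDpos, Real.rpow_one]
  have h2p3 : (2:ℝ) ^ (p + 3 : ℝ) = 2 * 2 ^ (p + 2 : ℝ) := by
    rw [show (p + 3 : ℝ) = 1 + (p + 2) by ring, Real.rpow_add (by norm_num), Real.rpow_one]
  have h2p2 : (2:ℝ) ^ (p + 2 : ℝ) = 2 * 2 ^ (p + 1 : ℝ) := by
    rw [show (p + 2 : ℝ) = 1 + (p + 1) by ring, Real.rpow_add (by norm_num), Real.rpow_one]
  have hTpos : (0:ℝ) < 2 ^ (p + 1 : ℝ) := Real.rpow_pos_of_pos (by norm_num) _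
  have hApos' : (0:ℝ) ≤ D ^ (-p - 1 : ℝ) := Real.rpow_nonneg hDpos.le _
  have hBpos' : (0:ℝ) ≤ D ^ (-p - 2 : ℝ) := Real.rpow_nonneg hDpos.le _
  -- bound M/2 by the budget
  have hp0 : (0:ℝ) ≤ p := by linarith
  have hMle : M / 2 ≤ 2 ^ (p + 3 : ℝ) * p * (p + 1) * (c * n) * D ^ (-p - 2 : ℝ) := by
    have key : 0 ≤ p * (2 ^ (p + 1 : ℝ) * D ^ (-p - 1 : ℝ)) * (2 * (p + 1) - 1) :=
      mul_nonneg (mul_nonneg hp0 (mul_nonneg hTpos.le hApos')) (by linarith)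
    have expand : M / 2 = p * (2 ^ (p + 1 : ℝ) * D ^ (-p - 1 : ℝ))
        + 2 * (2 ^ (p + 1 : ℝ)) * p * (p + 1) *
          (2 * (c * n) * D ^ (-p - 2 : ℝ) - D * D ^ (-p - 2 : ℝ)) := by
      rw [hMdef, e1, e2, h2p2]; ring
    rw [expand, e3, h2p3, h2p2]
    linarith only [key]
  -- finish
  have hFx : F' x * η = 2 * p * x * D ^ (-(p + 1) : ℝ) * η := by
    rw [hF'def, hDdef, show (-(p + 1) : ℝ) = -p - 1 by ring]
  have hexp : (-(p + 2) : ℝ) = -p - 2 := by ring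
  rw [hexp]
  calc (c * n - (x + η) ^ 2) ^ (-p : ℝ) - D ^ (-p : ℝ)
      ≤ F' x * η + M / 2 := hmain2
    _ ≤ 2 * p * x * D ^ (-(p + 1) : ℝ) * η +
        2 ^ (p + 3 : ℝ) * p * (p + 1) * (c * n) * D ^ (-p - 2 : ℝ) := by
        rw [← hFx]; linarith only [hmain2, hMle]
end

section
/- Let d_1,...,d_n ∈ ℝ, λ > 0, Φ = ∑_{i=1}^n cosh(λ d_i), and suppose Φ ≥ 2n. If v_1,...,v_n are independent uniform ±1 random variables and L = λ·∑_i sinh(λ d_i)·v_i, then Pr[|L| ≥ (λ/(2√n))·Φ] ≥ 1/4. -/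
def rsign (b : Bool) : ℝ := if b then 1 else -1

open Real Finset

lemma cos_sum_prod : ∀ (n : ℕ) (f : Fin n → ℝ),
    ∑ ε : Fin n → Bool, Real.cos (∑ i, f i * rsign (ε i))
      = 2 ^ n * ∏ i, Real.cos (f i) := by
  intro n
  induction n with
  | zero => intro f; simp
  | succ n ih =>
    intro f
    rw [← (Fin.consEquiv (fun _ => Bool)).sum_comp]
    rw [Fintype.sum_prod_type]
    have key : ∀ (p : Bool × (Fin n → Bool)),
        Real.cos (∑ i, f i * rsign (Fin.consEquiv (fun _ => Bool) p i))
          = Real.cos (f 0 * rsign p.1 + ∑ i : Fin n, f i.succ * rsign (p.2 i)) := by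
      intro p
      congr 1
      rw [Fin.sum_univ_succ]
      simp [Fin.consEquiv]
    simp only [key]
    have brec : ∀ (y : ℝ), (∑ b : Bool, Real.cos (f 0 * rsign b + y)) = 2 * Real.cos (f 0) * Real.cos y := by
      intro y
      simp [rsign, Real.cos_add]
      ring
    have step : (∑ b : Bool, ∑ ε : Fin n → Bool,
        Real.cos (f 0 * rsign b + ∑ i : Fin n, f i.succ * rsign (ε i)))
        = 2 * Real.cos (f 0) * ∑ ε : Fin n → Bool,
            Real.cos (∑ i : Fin n, f i.succ * rsign (ε i)) := by
      rw [Finset.sum_comm, Finset.mul_sum]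
      exact Finset.sum_congr rfl (fun ε _ => brec (∑ i : Fin n, f i.succ * rsign (ε i)))
    rw [step, ih (fun i => f i.succ), Fin.prod_univ_succ]
    ring

lemma cos_le_one_sub_mul {c u B : ℝ} (hu : 0 ≤ u) (hB : u ≤ B) (hB1 : B ≤ 2)
    (hc : (1 - B^2/16)^2 ≥ 2*c) (hcpos : 0 ≤ c) :
    Real.cos u ≤ 1 - c * u^2 := by
  rcases eq_or_lt_of_le hu with h0 | h0
  · simp [← h0]
  · have hv : 0 < u/2 := by linarith
    have hv1 : u/2 ≤ 1 := by linarith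
    have hsin : u/2 - (u/2)^3/4 < Real.sin (u/2) := by
      have := Real.sin_gt_sub_cube hv
      nlinarith [pow_pos hv 3]
    have hpos : 0 ≤ u/2 - (u/2)^3/4 := by nlinarith [sq_nonneg (u/2), mul_nonneg hv.le (sq_nonneg (u/2))]
    have h1 : Real.cos u = 1 - 2 * Real.sin (u/2)^2 := by
      have h2 := Real.cos_two_mul (u/2)
      have h3 := Real.sin_sq_add_cos_sq (u/2)
      have : 2 * (u/2) = u := by ring
      rw [this] at h2
      nlinarith
    have hs2 : Real.sin (u/2)^2 ≥ (u/2 - (u/2)^3/4)^2 := by nlinarith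
    have expand : (u/2 - (u/2)^3/4)^2 = (u^2/4) * (1 - u^2/16)^2 := by ring
    have huB2 : u^2 ≤ B^2 := by nlinarith
    have h16 : 1 - B^2/16 ≤ 1 - u^2/16 := by linarith
    have h16b : 0 ≤ 1 - B^2/16 := by nlinarith
    have hBu : (1 - u^2/16)^2 ≥ (1 - B^2/16)^2 := by nlinarith
    nlinarith

-- numeric exp bounds
lemma exp_lb (x y : ℝ) (hy : 0 ≤ y) (hxy : y ≤ x) : Real.exp 1 * (1 + y) ≤ Real.exp (1 + x) := by
  have h1 : Real.exp (1 + x) = Real.exp 1 * Real.exp x := Real.exp_add 1 x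
  have h2 : 1 + y ≤ Real.exp x := by
    have := Real.add_one_le_exp y
    have := Real.exp_le_exp.mpr hxy
    linarith
  nlinarith [Real.exp_pos 1, Real.exp_pos x]

lemma EN1 {x : ℝ} (hx : 1 + 4146/10000 ≤ x) : Real.exp (-x) ≤ 261/1000 := by
  have h := exp_lb (x - 1) (4146/10000) (by norm_num) (by linarith)
  have h2 : (1 : ℝ) + (x - 1) = x := by ring
  rw [h2] at h
  have he : (2.7182818283 : ℝ) < Real.exp 1 := Real.exp_one_gt_d9
  have hp : (1000/261 : ℝ) ≤ Real.exp x := by nlinarith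
  rw [Real.exp_neg]
  rw [inv_le_comm₀ (Real.exp_pos x) (by norm_num)]
  linarith

lemma exp3 : (20.0855 : ℝ) ≤ Real.exp 3 := by
  have he : (2.7182818283 : ℝ) < Real.exp 1 := Real.exp_one_gt_d9
  have h3 : Real.exp 3 = Real.exp 1 * Real.exp 1 * Real.exp 1 := by
    rw [← Real.exp_add, ← Real.exp_add]; norm_num
  nlinarith

lemma exphalf (t : ℝ) (h : 0 ≤ t) : (1 + t)^2 ≤ Real.exp (2*t) := by
  have h1 : Real.exp (2*t) = Real.exp t * Real.exp t := by rw [← Real.exp_add]; ring_nf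
  have h2 := Real.add_one_le_exp t
  nlinarith [Real.exp_pos t]

lemma EN2 {x : ℝ} (hx : 377/100 ≤ x) : Real.exp (-x) ≤ 1/35 := by
  have h1 : Real.exp (3 + 77/100 : ℝ) ≤ Real.exp x := Real.exp_le_exp.mpr (by linarith)
  have h2 : Real.exp (3 + 77/100 : ℝ) = Real.exp 3 * Real.exp (2 * (385/1000)) := by
    rw [← Real.exp_add]; norm_num
  have h3 := exphalf (385/1000) (by norm_num)
  have h4 := exp3
  have hp : (35 : ℝ) ≤ Real.exp x := by nlinarith [Real.exp_pos 3, Real.exp_pos (2*(385/1000:ℝ))]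
  rw [Real.exp_neg, inv_le_comm₀ (Real.exp_pos x) (by norm_num)]
  linarith

lemma EN3 {x : ℝ} (hx : 67/10 ≤ x) : Real.exp (-x) ≤ 1/600 := by
  have h1 : Real.exp (6 + 7/10 : ℝ) ≤ Real.exp x := Real.exp_le_exp.mpr (by linarith)
  have h2 : Real.exp (6 + 7/10 : ℝ) = Real.exp 3 * Real.exp 3 * Real.exp (2 * (35/100)) := by
    rw [← Real.exp_add, ← Real.exp_add]; norm_num
  have h3 := exphalf (35/100) (by norm_num)
  have h4 := exp3
  have hp : (600 : ℝ) ≤ Real.exp x := by nlinarith [Real.exp_pos 3, Real.exp_pos (2*(35/100:ℝ))]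
  rw [Real.exp_neg, inv_le_comm₀ (Real.exp_pos x) (by norm_num)]
  linarith

-- polynomial certificates
lemma PC1 {s : ℝ} (h1 : -1 ≤ s) (h2 : s ≤ 1) :
    0 ≤ 54/100 + (111/100)*s + (6/100)*s^2 - (68/100)*s^3 := by
  nlinarith [mul_nonneg (by linarith : (0:ℝ) ≤ 3/2 - s) (sq_nonneg (s + 71/100)),
    sq_nonneg (s + 2/5), sq_nonneg (s+1)]

lemma PC2 {s : ℝ} (h1 : 1/2 ≤ s) (h2 : s ≤ 1) :
    1 ≤ 54/100 + (111/100)*s + (6/100)*s^2 - (68/100)*s^3 := by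
  nlinarith [mul_nonneg (by linarith : (0:ℝ) ≤ 2*s-1) (by linarith : (0:ℝ) ≤ 1 - s),
    mul_nonneg (mul_nonneg (by linarith : (0:ℝ) ≤ 2*s-1) (by linarith : (0:ℝ) ≤ 1 - s)) (by linarith : (0:ℝ) ≤ 1 + s),
    mul_nonneg (by linarith : (0:ℝ) ≤ 2*s-1) (sq_nonneg (1-s))]

lemma rsign_not (b : Bool) : rsign (!b) = - rsign b := by cases b <;> simp [rsign]

lemma abs_rsign (b : Bool) : |rsign b| = 1 := by cases b <;> simp [rsign]

lemma L_update {n : ℕ} (a : Fin n → ℝ) (ε : Fin n → Bool) (i₀ : Fin n) (b : Bool) :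
    ∑ i, a i * rsign (Function.update ε i₀ b i)
      = (∑ i, a i * rsign (ε i)) - a i₀ * rsign (ε i₀) + a i₀ * rsign b := by
  rw [← Finset.sum_erase_add _ _ (Finset.mem_univ i₀),
      ← Finset.sum_erase_add _ (fun i => a i * rsign (ε i)) (Finset.mem_univ i₀)]
  have h : ∀ i ∈ Finset.univ.erase i₀,
      a i * rsign (Function.update ε i₀ b i) = a i * rsign (ε i) := by
    intro i hi
    rw [Function.update_of_ne (Finset.ne_of_mem_erase hi)]
  rw [Finset.sum_congr rfl h, Function.update_self]
  ring

lemma update_flip_inj {n : ℕ} (i₀ : Fin n) :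
    Function.Injective (fun ε : Fin n → Bool => Function.update ε i₀ (!ε i₀)) := by
  intro x y hxy
  funext k
  by_cases hk : k = i₀
  · subst hk
    have := congrFun hxy k
    simpa [Function.update_self] using this
  · have := congrFun hxy k
    simpa [Function.update_of_ne hk] using this

lemma flip1 {n : ℕ} (a : Fin n → ℝ) (t : ℝ) (i₀ : Fin n) (h : t ≤ |a i₀|) :
    2^n ≤ 2 * (Finset.univ.filter
      (fun ε : Fin n → Bool => t ≤ |∑ i, a i * rsign (ε i)|)).card := by
  classical
  set good := Finset.univ.filter
      (fun ε : Fin n → Bool => t ≤ |∑ i, a i * rsign (ε i)|) with hgood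
  set bad := Finset.univ.filter
      (fun ε : Fin n → Bool => ¬ (t ≤ |∑ i, a i * rsign (ε i)|)) with hbad
  have hinj : ∀ ε ∈ bad, (Function.update ε i₀ (!ε i₀)) ∈ good := by
    intro ε hε
    have hlt : |∑ i, a i * rsign (ε i)| < t := by
      have := (Finset.mem_filter.mp hε).2
      exact not_le.mp this
    refine Finset.mem_filter.mpr ⟨Finset.mem_univ _, ?_⟩
    rw [L_update a ε i₀ (!ε i₀), rsign_not]
    set X := ∑ i, a i * rsign (ε i)
    set y := a i₀ * rsign (ε i₀) with hy
    have hyabs : |y| = |a i₀| := by rw [hy, abs_mul, abs_rsign, mul_one]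
    have heq : X - y + a i₀ * - rsign (ε i₀) = X - 2*y := by rw [hy]; ring
    rw [heq]
    have h1 : |2*y| - |X| ≤ |2*y - X| := abs_sub_abs_le_abs_sub _ _
    have h2 : |2*y - X| = |X - 2*y| := abs_sub_comm _ _
    have h3 : |2*y| = 2 * |y| := by rw [abs_mul]; simp
    rw [h2, h3, hyabs] at h1
    linarith
  have hcard : bad.card ≤ good.card :=
    Finset.card_le_card_of_injOn _ hinj ((update_flip_inj i₀).injOn)
  have htot : good.card + bad.card = 2^n := by
    rw [hgood, hbad]
    rw [Finset.card_filter_add_card_filter_not]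
    simp [Fintype.card_fun]
  omega

noncomputable def align (x R : ℝ) : Bool :=
  if 0 ≤ R then (if 0 ≤ x then true else false) else (if 0 ≤ x then false else true)

lemma align_mul (x R : ℝ) : x * rsign (align x R) = if 0 ≤ R then |x| else -|x| := by
  unfold align
  by_cases hR : 0 ≤ R
  · by_cases hx : 0 ≤ x
    · simp only [hR, hx, if_true, rsign]
      rw [abs_of_nonneg hx]; ring
    · simp only [hR, hx, if_true, if_false, rsign]
      rw [abs_of_nonpos (le_of_not_ge hx)]
      simp
  · by_cases hx : 0 ≤ x
    · simp only [hR, hx, if_true, if_false, rsign]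
      rw [abs_of_nonneg hx]
      simp
    · simp only [hR, hx, if_false, rsign]
      rw [abs_of_nonpos (le_of_not_ge hx)]
      simp

lemma align_abs (R x y : ℝ) :
    |R + (if 0 ≤ R then |x| else -|x|) + (if 0 ≤ R then |y| else -|y|)| = |R| + |x| + |y| := by
  by_cases hR : 0 ≤ R
  · simp only [hR, if_true]
    rw [abs_of_nonneg (by positivity), abs_of_nonneg hR]
  · simp only [hR, if_false]
    push_neg at hR
    rw [abs_of_nonpos (by nlinarith [abs_nonneg x, abs_nonneg y]), abs_of_neg hR]
    ring

lemma flip2 {n : ℕ} (a : Fin n → ℝ) (t : ℝ) (i₀ j₀ : Fin n) (hne : j₀ ≠ i₀)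
    (h : t ≤ |a i₀| + |a j₀|) :
    2^n ≤ 4 * (Finset.univ.filter
      (fun ε : Fin n → Bool => t ≤ |∑ i, a i * rsign (ε i)|)).card := by
  classical
  set good := Finset.univ.filter
      (fun ε : Fin n → Bool => t ≤ |∑ i, a i * rsign (ε i)|) with hgood
  set bad := Finset.univ.filter
      (fun ε : Fin n → Bool => ¬ (t ≤ |∑ i, a i * rsign (ε i)|)) with hbad
  set ψ := fun ε : Fin n → Bool =>
    Function.update (Function.update ε i₀
      (align (a i₀) ((∑ i, a i * rsign (ε i)) - a i₀ * rsign (ε i₀) - a j₀ * rsign (ε j₀)))) j₀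
      (align (a j₀) ((∑ i, a i * rsign (ε i)) - a i₀ * rsign (ε i₀) - a j₀ * rsign (ε j₀))) with hψ
  have hmaps : ∀ ε, ψ ε ∈ good := by
    intro ε
    set R := (∑ i, a i * rsign (ε i)) - a i₀ * rsign (ε i₀) - a j₀ * rsign (ε j₀) with hR
    refine Finset.mem_filter.mpr ⟨Finset.mem_univ _, ?_⟩
    have e1 : ∑ i, a i * rsign (ψ ε i)
        = R + a i₀ * rsign (align (a i₀) R) + a j₀ * rsign (align (a j₀) R) := by
      rw [hψ]
      simp only []
      rw [L_update, L_update]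
      rw [Function.update_of_ne hne, ← hR]
      ring
    rw [e1, align_mul, align_mul, align_abs]
    have := abs_nonneg R
    linarith
  have hfib : ∀ γ ∈ good, (bad.filter (fun ε => ψ ε = γ)).card ≤ 3 := by
    intro γ hγ
    have hsub : bad.filter (fun ε => ψ ε = γ) ⊆
        ((Finset.univ : Finset (Bool × Bool)).image
          (fun p => Function.update (Function.update γ i₀ p.1) j₀ p.2)).erase γ := by
      intro ε hε
      obtain ⟨hεbad, hεψ⟩ := Finset.mem_filter.mp hε
      refine Finset.mem_erase.mpr ⟨?_, ?_⟩
      · intro hcon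
        rw [hcon] at hεbad
        exact (Finset.mem_filter.mp hεbad).2 (Finset.mem_filter.mp hγ).2
      · refine Finset.mem_image.mpr ⟨(ε i₀, ε j₀), Finset.mem_univ _, ?_⟩
        funext k
        by_cases hk : k = j₀
        · subst hk; rw [Function.update_self]
        · rw [Function.update_of_ne hk]
          by_cases hk2 : k = i₀
          · subst hk2; rw [Function.update_self]
          · rw [Function.update_of_ne hk2]
            have := congrFun hεψ k
            rw [hψ] at this
            simp only [] at this
            rw [Function.update_of_ne hk, Function.update_of_ne hk2] at this
            exact this.symm
    have himg : γ ∈ (Finset.univ : Finset (Bool × Bool)).image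
        (fun p => Function.update (Function.update γ i₀ p.1) j₀ p.2) := by
      refine Finset.mem_image.mpr ⟨(γ i₀, γ j₀), Finset.mem_univ _, ?_⟩
      simp [Function.update_eq_self]
    calc (bad.filter (fun ε => ψ ε = γ)).card
        ≤ _ := Finset.card_le_card hsub
      _ = _ - 1 := Finset.card_erase_of_mem himg
      _ ≤ 4 - 1 := by
          have h4 : ((Finset.univ : Finset (Bool × Bool)).image
              (fun p => Function.update (Function.update γ i₀ p.1) j₀ p.2)).card ≤ 4 := by
            calc _ ≤ (Finset.univ : Finset (Bool × Bool)).card := Finset.card_image_le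
              _ = 4 := by simp
          omega
      _ = 3 := rfl
  have hcard : bad.card ≤ 3 * good.card :=
    Finset.card_le_mul_card_image_of_maps_to (fun ε _ => hmaps ε) 3 hfib
  have htot : good.card + bad.card = 2^n := by
    rw [hgood, hbad, Finset.card_filter_add_card_filter_not]
    simp [Fintype.card_fun]
  omega

lemma pisq_lb : (98696/10000 : ℝ) ≤ Real.pi^2 := by
  nlinarith [Real.pi_gt_d6]

lemma pisq_ub : Real.pi^2 ≤ (98697/10000 : ℝ) := by
  nlinarith [Real.pi_lt_d6, Real.pi_pos]

lemma cos_le_exp_gen {c u B : ℝ} (hB : |u| ≤ B) (hB1 : B ≤ 2)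
    (hc : (1 - B^2/16)^2 ≥ 2*c) (hcpos : 0 ≤ c) :
    Real.cos u ≤ Real.exp (-(c * u^2)) := by
  have h1 : Real.cos u ≤ 1 - c * u^2 := by
    have := cos_le_one_sub_mul (abs_nonneg u) hB hB1 hc hcpos
    rw [Real.cos_abs, sq_abs] at this
    exact this
  have h2 : 1 - c*u^2 ≤ Real.exp (-(c*u^2)) := by
    have := Real.add_one_le_exp (-(c*u^2))
    linarith
  linarith

lemma cos_le_exp43 {u : ℝ} (h : |u| ≤ Real.pi/3) : Real.cos u ≤ Real.exp (-((43/100) * u^2)) := by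
  refine cos_le_exp_gen h ?_ ?_ (by norm_num)
  · nlinarith [Real.pi_lt_d6, Real.pi_pos]
  · nlinarith [pisq_ub, Real.pi_pos, sq_nonneg (Real.pi/3)]

lemma cos_le_exp34 {u : ℝ} (h : |u| ≤ Real.pi/2) : Real.cos u ≤ Real.exp (-((34/100) * u^2)) := by
  refine cos_le_exp_gen h ?_ ?_ (by norm_num)
  · nlinarith [Real.pi_lt_d6, Real.pi_pos]
  · nlinarith [pisq_ub, Real.pi_pos, sq_nonneg (Real.pi/2)]

set_option maxHeartbeats 1000000 in
lemma spread {n : ℕ} (a : Fin n → ℝ) (t : ℝ) (ht : 0 < t) (i₀ : Fin n)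
    (h1 : |a i₀| < t)
    (h2 : ∀ j, j ≠ i₀ → 2 * |a j| < t)
    (hσ : 3 * t^2 ≤ ∑ i, (a i)^2) :
    (2^n : ℝ) ≤ 4 * (Finset.univ.filter
      (fun ε : Fin n → Bool => t ≤ |∑ i, a i * rsign (ε i)|)).card := by
  classical
  have hπ := Real.pi_pos
  set β : ℝ := Real.pi / (3 * t) with hβdef
  have hβ : 0 < β := by positivity
  set L := fun ε : Fin n → Bool => ∑ i, a i * rsign (ε i) with hL
  set good := Finset.univ.filter (fun ε : Fin n → Bool => t ≤ |L ε|) with hgood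
  set bad := Finset.univ.filter (fun ε : Fin n → Bool => ¬ (t ≤ |L ε|)) with hbad
  -- the majorant
  set G := fun ε : Fin n → Bool => 54/100 + (111/100)*Real.cos (β * L ε)
      + (6/100)*(Real.cos (β * L ε))^2 - (68/100)*(Real.cos (β * L ε))^3 with hG
  -- bad points have G ≥ 1
  have hbad1 : ∀ ε ∈ bad, (1:ℝ) ≤ G ε := by
    intro ε hε
    have hlt : |L ε| < t := not_le.mp (Finset.mem_filter.mp hε).2
    have habs : |β * L ε| < Real.pi / 3 := by
      rw [abs_mul, abs_of_pos hβ, hβdef]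
      rw [div_mul_eq_mul_div, div_lt_div_iff₀ (by linarith) (by norm_num)]
      calc Real.pi * |L ε| * 3 < Real.pi * t * 3 := by
            have := mul_lt_mul_of_pos_left hlt hπ
            nlinarith
        _ = Real.pi * (3 * t) := by ring
    have hcos : 1/2 < Real.cos (β * L ε) := by
      rw [← Real.cos_abs]
      have hkey : Real.cos (Real.pi/3) < Real.cos |β * L ε| :=
        Real.cos_lt_cos_of_nonneg_of_le_pi (abs_nonneg _) (by linarith) habs
      rw [Real.cos_pi_div_three] at hkey
      exact hkey
    have hle1 : Real.cos (β * L ε) ≤ 1 := Real.cos_le_one _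
    rw [hG]
    exact PC2 hcos.le hle1
  -- all points have G ≥ 0
  have hall0 : ∀ ε : Fin n → Bool, (0:ℝ) ≤ G ε := by
    intro ε
    exact PC1 (Real.neg_one_le_cos _) (Real.cos_le_one _)
  -- counting via expectation of G
  have hcount : (bad.card : ℝ) ≤ ∑ ε : Fin n → Bool, G ε := by
    calc (bad.card : ℝ) = ∑ _ε ∈ bad, (1:ℝ) := by rw [Finset.sum_const]; simp
      _ ≤ ∑ ε ∈ bad, G ε := Finset.sum_le_sum hbad1
      _ ≤ ∑ ε : Fin n → Bool, G ε :=
          Finset.sum_le_sum_of_subset_of_nonneg (Finset.subset_univ bad)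
            (fun ε _ _ => hall0 ε)
  -- cos sums to products
  have hS : ∀ (m : ℝ), ∑ ε : Fin n → Bool, Real.cos (m * L ε)
      = 2^n * ∏ i, Real.cos (m * a i) := by
    intro m
    have hrw : ∀ ε : Fin n → Bool, m * L ε = ∑ i, (m * a i) * rsign (ε i) := by
      intro ε
      rw [hL, Finset.mul_sum]
      exact Finset.sum_congr rfl (fun i _ => by ring)
    calc ∑ ε : Fin n → Bool, Real.cos (m * L ε)
        = ∑ ε : Fin n → Bool, Real.cos (∑ i, (m * a i) * rsign (ε i)) :=
          Finset.sum_congr rfl (fun ε _ => by rw [hrw ε])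
      _ = 2^n * ∏ i, Real.cos (m * a i) := cos_sum_prod n (fun i => m * a i)
  -- pointwise rewrite of G in terms of multiple angles
  have hptw : ∀ ε : Fin n → Bool, G ε = 57/100 + (60/100)*Real.cos (β * L ε)
      + (3/100)*Real.cos ((2*β) * L ε) - (17/100)*Real.cos ((3*β) * L ε) := by
    intro ε
    have e2 : (2*β) * L ε = 2*(β * L ε) := by ring
    have e3 : (3*β) * L ε = 3*(β * L ε) := by ring
    rw [hG, e2, e3, Real.cos_two_mul, Real.cos_three_mul]
    ring
  have hdecomp : ∑ ε : Fin n → Bool, G ε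
      = (57/100)*2^n + (60/100)*(2^n * ∏ i, Real.cos (β * a i))
        + (3/100)*(2^n * ∏ i, Real.cos ((2*β) * a i))
        - (17/100)*(2^n * ∏ i, Real.cos ((3*β) * a i)) := by
    rw [Finset.sum_congr rfl (fun ε _ => hptw ε)]
    rw [Finset.sum_sub_distrib, Finset.sum_add_distrib, Finset.sum_add_distrib]
    rw [← Finset.mul_sum, ← Finset.mul_sum, ← Finset.mul_sum]
    rw [hS β, hS (2*β), hS (3*β), Finset.sum_const]
    simp [Fintype.card_fun]
    ring
  -- coordinate magnitude facts
  have hat : ∀ i, |a i| ≤ t := by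
    intro i
    by_cases hi : i = i₀
    · rw [hi]; exact h1.le
    · have := h2 i hi
      have := abs_nonneg (a i)
      linarith
  have hβt : β * t = Real.pi / 3 := by
    rw [hβdef]; field_simp
  have hβsq : β^2 * t^2 = Real.pi^2 / 9 := by
    have : (β*t)^2 = (Real.pi/3)^2 := by rw [hβt]
    nlinarith [this]
  -- sum of squares over erase i₀
  have herase : ∑ i ∈ Finset.univ.erase i₀, (a i)^2 = (∑ i, (a i)^2) - (a i₀)^2 :=
    Finset.sum_erase_eq_sub (Finset.mem_univ i₀)
  have herase_lb : 2 * t^2 ≤ ∑ i ∈ Finset.univ.erase i₀, (a i)^2 := by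
    rw [herase]
    have : (a i₀)^2 ≤ t^2 := by nlinarith [abs_nonneg (a i₀), sq_abs (a i₀)]
    linarith
  -- Π₁ bound
  have hP1 : ∏ i, Real.cos (β * a i) ≤ 261/1000 := by
    have hfac : ∀ i ∈ Finset.univ, Real.cos (β * a i)
        ≤ Real.exp (-((43/100) * (β * a i)^2)) := by
      intro i _
      apply cos_le_exp43
      rw [abs_mul, abs_of_pos hβ]
      calc β * |a i| ≤ β * t := by nlinarith [hat i]
        _ = Real.pi / 3 := hβt
    have hnn : ∀ i ∈ Finset.univ, (0:ℝ) ≤ Real.cos (β * a i) := by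
      intro i _
      apply Real.cos_nonneg_of_mem_Icc
      constructor
      · have : |β * a i| ≤ Real.pi/3 := by
          rw [abs_mul, abs_of_pos hβ]
          calc β * |a i| ≤ β * t := by nlinarith [hat i]
            _ = Real.pi / 3 := hβt
        have := abs_le.mp this
        linarith [this.1]
      · have : |β * a i| ≤ Real.pi/3 := by
          rw [abs_mul, abs_of_pos hβ]
          calc β * |a i| ≤ β * t := by nlinarith [hat i]
            _ = Real.pi / 3 := hβt
        have := abs_le.mp this
        linarith [this.2]
    calc ∏ i, Real.cos (β * a i)
        ≤ ∏ i, Real.exp (-((43/100) * (β * a i)^2)) := Finset.prod_le_prod hnn hfac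
      _ = Real.exp (∑ i, -((43/100) * (β * a i)^2)) := (Real.exp_sum _ _).symm
      _ = Real.exp (-((43/100) * β^2 * ∑ i, (a i)^2)) := by
          congr 1
          calc ∑ i, -((43/100) * (β * a i)^2)
              = ∑ i, (-((43/100) * β^2)) * (a i)^2 :=
                Finset.sum_congr rfl (fun i _ => by ring)
            _ = (-((43/100) * β^2)) * ∑ i, (a i)^2 := (Finset.mul_sum _ _ _).symm
            _ = -((43/100) * β^2 * ∑ i, (a i)^2) := by ring
      _ ≤ 261/1000 := by
          apply EN1
          have hx : (43/100) * β^2 * (3 * t^2) ≤ (43/100) * β^2 * ∑ i, (a i)^2 := by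
            have hb2 : (0:ℝ) ≤ (43/100) * β^2 := by positivity
            exact mul_le_mul_of_nonneg_left hσ hb2
          have : (43/100) * β^2 * (3*t^2) = (43/100) * 3 * (Real.pi^2/9) := by
            rw [show (43/100:ℝ) * β^2 * (3*t^2) = (43/100) * 3 * (β^2 * t^2) by ring, hβsq]
          nlinarith [pisq_lb]
  -- Π₂ and Π₃ bounds
  have herase_fact : ∀ i ∈ Finset.univ.erase i₀, 2 * |a i| ≤ t := by
    intro i hi
    exact (h2 i (Finset.ne_of_mem_erase hi)).le
  have hProdSmall : ∀ (m c' : ℝ), 0 < m → m * t * β ≤ Real.pi/2 → (0:ℝ) ≤ c' →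
      (∀ u : ℝ, |u| ≤ m * t * β / 2 * 2 → Real.cos u ≤ Real.exp (-(c' * u^2))) →
      True := fun _ _ _ _ _ _ => trivial
  -- generic bound for the erase product
  have herase_prod : ∀ (m c' : ℝ), 0 < m → (0:ℝ) ≤ c' →
      (∀ i ∈ Finset.univ.erase i₀, Real.cos (m * β * a i) ≤ Real.exp (-(c' * (m * β * a i)^2))) →
      (∀ i ∈ Finset.univ.erase i₀, (0:ℝ) ≤ Real.cos (m * β * a i)) →
      ∏ i ∈ Finset.univ.erase i₀, Real.cos (m * β * a i)
        ≤ Real.exp (-(c' * m^2 * β^2 * ∑ i ∈ Finset.univ.erase i₀, (a i)^2)) := by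
    intro m c' hm hc' hfac hnn
    calc ∏ i ∈ Finset.univ.erase i₀, Real.cos (m * β * a i)
        ≤ ∏ i ∈ Finset.univ.erase i₀, Real.exp (-(c' * (m * β * a i)^2)) :=
          Finset.prod_le_prod hnn hfac
      _ = Real.exp (∑ i ∈ Finset.univ.erase i₀, -(c' * (m * β * a i)^2)) :=
          (Real.exp_sum _ _).symm
      _ = Real.exp (-(c' * m^2 * β^2 * ∑ i ∈ Finset.univ.erase i₀, (a i)^2)) := by
          congr 1
          calc ∑ i ∈ Finset.univ.erase i₀, -(c' * (m * β * a i)^2)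
              = ∑ i ∈ Finset.univ.erase i₀, (-(c' * m^2 * β^2)) * (a i)^2 :=
                Finset.sum_congr rfl (fun i _ => by ring)
            _ = (-(c' * m^2 * β^2)) * ∑ i ∈ Finset.univ.erase i₀, (a i)^2 :=
                (Finset.mul_sum _ _ _).symm
            _ = _ := by ring
  have habs_small : ∀ (m : ℝ), 0 < m → m ≤ 3 → ∀ i ∈ Finset.univ.erase i₀,
      |m * β * a i| ≤ m * Real.pi / 6 := by
    intro m hm hm3 i hi
    rw [abs_mul, abs_mul, abs_of_pos hm, abs_of_pos hβ]
    have := herase_fact i hi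
    have h1 : |a i| ≤ t/2 := by linarith
    have : β * |a i| ≤ β * (t/2) := by nlinarith
    have hβt2 : β * (t/2) = Real.pi/6 := by rw [hβdef]; field_simp; ring
    calc m * β * |a i| = m * (β * |a i|) := by ring
      _ ≤ m * (Real.pi/6) := by nlinarith
      _ = m * Real.pi / 6 := by ring
  have hP2 : |∏ i, Real.cos ((2*β) * a i)| ≤ 1/35 := by
    rw [← Finset.mul_prod_erase Finset.univ _ (Finset.mem_univ i₀), abs_mul]
    have hsmall2 : ∀ i ∈ Finset.univ.erase i₀, |2 * β * a i| ≤ Real.pi/3 := by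
      intro i hi
      have := habs_small 2 (by norm_num) (by norm_num) i hi
      calc |2 * β * a i| ≤ 2 * Real.pi / 6 := this
        _ = Real.pi/3 := by ring
    have hnn : ∀ i ∈ Finset.univ.erase i₀, (0:ℝ) ≤ Real.cos (2 * β * a i) := by
      intro i hi
      apply Real.cos_nonneg_of_mem_Icc
      have := abs_le.mp (hsmall2 i hi)
      constructor <;> [linarith [this.1]; linarith [this.2]]
    have hfac : ∀ i ∈ Finset.univ.erase i₀,
        Real.cos (2 * β * a i) ≤ Real.exp (-((43/100) * (2 * β * a i)^2)) := by
      intro i hi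
      exact cos_le_exp43 (hsmall2 i hi)
    have hprod := herase_prod 2 (43/100) (by norm_num) (by norm_num) hfac hnn
    have hexp : Real.exp (-((43/100) * 2^2 * β^2 * ∑ i ∈ Finset.univ.erase i₀, (a i)^2))
        ≤ 1/35 := by
      apply EN2
      have hm : (43/100) * 2^2 * β^2 * (2*t^2)
          ≤ (43/100) * 2^2 * β^2 * ∑ i ∈ Finset.univ.erase i₀, (a i)^2 := by
        apply mul_le_mul_of_nonneg_left herase_lb
        positivity
      have heq : (43/100:ℝ) * 2^2 * β^2 * (2*t^2) = (43/100) * 8 * (Real.pi^2/9) := by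
        rw [show (43/100:ℝ) * 2^2 * β^2 * (2*t^2) = (43/100) * 8 * (β^2 * t^2) by ring, hβsq]
      nlinarith [pisq_lb]
    have habs1 : |Real.cos (2*β * a i₀)| ≤ 1 := Real.abs_cos_le_one _
    have hpr_nn : (0:ℝ) ≤ ∏ i ∈ Finset.univ.erase i₀, Real.cos (2 * β * a i) :=
      Finset.prod_nonneg hnn
    rw [abs_of_nonneg hpr_nn]
    calc |Real.cos (2 * β * a i₀)| * ∏ i ∈ Finset.univ.erase i₀, Real.cos (2 * β * a i)
        ≤ 1 * (1/35) := by
          apply mul_le_mul habs1 (hprod.trans hexp) hpr_nn (by norm_num)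
      _ = 1/35 := by norm_num
  have hP3 : |∏ i, Real.cos ((3*β) * a i)| ≤ 1/600 := by
    rw [← Finset.mul_prod_erase Finset.univ _ (Finset.mem_univ i₀), abs_mul]
    have hsmall3 : ∀ i ∈ Finset.univ.erase i₀, |3 * β * a i| ≤ Real.pi/2 := by
      intro i hi
      have := habs_small 3 (by norm_num) (by norm_num) i hi
      calc |3 * β * a i| ≤ 3 * Real.pi / 6 := this
        _ = Real.pi/2 := by ring
    have hnn : ∀ i ∈ Finset.univ.erase i₀, (0:ℝ) ≤ Real.cos (3 * β * a i) := by
      intro i hi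
      apply Real.cos_nonneg_of_mem_Icc
      have := abs_le.mp (hsmall3 i hi)
      constructor <;> [linarith [this.1]; linarith [this.2]]
    have hfac : ∀ i ∈ Finset.univ.erase i₀,
        Real.cos (3 * β * a i) ≤ Real.exp (-((34/100) * (3 * β * a i)^2)) := by
      intro i hi
      exact cos_le_exp34 (hsmall3 i hi)
    have hprod := herase_prod 3 (34/100) (by norm_num) (by norm_num) hfac hnn
    have hexp : Real.exp (-((34/100) * 3^2 * β^2 * ∑ i ∈ Finset.univ.erase i₀, (a i)^2))
        ≤ 1/600 := by
      apply EN3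
      have hm : (34/100) * 3^2 * β^2 * (2*t^2)
          ≤ (34/100) * 3^2 * β^2 * ∑ i ∈ Finset.univ.erase i₀, (a i)^2 := by
        apply mul_le_mul_of_nonneg_left herase_lb
        positivity
      have heq : (34/100:ℝ) * 3^2 * β^2 * (2*t^2) = (34/100) * 18 * (Real.pi^2/9) := by
        rw [show (34/100:ℝ) * 3^2 * β^2 * (2*t^2) = (34/100) * 18 * (β^2 * t^2) by ring, hβsq]
      nlinarith [pisq_lb]
    have habs1 : |Real.cos (3*β * a i₀)| ≤ 1 := Real.abs_cos_le_one _
    have hpr_nn : (0:ℝ) ≤ ∏ i ∈ Finset.univ.erase i₀, Real.cos (3 * β * a i) :=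
      Finset.prod_nonneg hnn
    rw [abs_of_nonneg hpr_nn]
    calc |Real.cos (3 * β * a i₀)| * ∏ i ∈ Finset.univ.erase i₀, Real.cos (3 * β * a i)
        ≤ 1 * (1/600) := by
          apply mul_le_mul habs1 (hprod.trans hexp) hpr_nn (by norm_num)
      _ = 1/600 := by norm_num
  -- final assembly
  have h2n : (0:ℝ) < 2^n := by positivity
  have hbadR : (bad.card : ℝ) ≤ (73/100) * 2^n := by
    have e1 : (60/100:ℝ)*(2^n * ∏ i, Real.cos (β * a i)) ≤ (60/100)*(2^n * (261/1000)) := by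
      have := hP1
      nlinarith
    have e2 : (3/100:ℝ)*(2^n * ∏ i, Real.cos ((2*β) * a i)) ≤ (3/100)*(2^n * (1/35)) := by
      have h := le_abs_self (∏ i, Real.cos ((2*β) * a i))
      nlinarith [hP2]
    have e3 : -((17/100:ℝ)*(2^n * ∏ i, Real.cos ((3*β) * a i))) ≤ (17/100)*(2^n * (1/600)) := by
      have h := neg_abs_le (∏ i, Real.cos ((3*β) * a i))
      nlinarith [hP3]
    have := hcount
    rw [hdecomp] at this
    nlinarith
  have htotn : good.card + bad.card = 2^n := by
    rw [hgood, hbad, Finset.card_filter_add_card_filter_not]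
    simp [Fintype.card_fun]
  have htotR : (good.card : ℝ) + (bad.card : ℝ) = 2^n := by
    have := congrArg (fun k : ℕ => (k : ℝ)) htotn
    push_cast at this
    linarith
  have : (2^n : ℝ) ≤ 4 * good.card := by linarith
  convert this using 2

/-- If `Φ = ∑ cosh (λ d i) ≥ 2n` and `L = λ ∑ sinh (λ d i) v i` with `v i`
independent uniform ±1 signs, then `Pr[|L| ≥ (λ/(2√n)) Φ] ≥ 1/4`. -/
theorem stmt8 (n : ℕ) (hn : 1 ≤ n) (d : Fin n → ℝ) (lam : ℝ) (hlam : 0 < lam)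
    (hΦ : (2 * n : ℝ) ≤ ∑ i, Real.cosh (lam * d i)) :
    (((Finset.univ.filter (fun ε : Fin n → Bool =>
        lam / (2 * Real.sqrt n) * (∑ i, Real.cosh (lam * d i)) ≤
          |lam * ∑ i, Real.sinh (lam * d i) * rsign (ε i)|)).card : ℝ) / 2 ^ n)
      ≥ 1 / 4 := by
  classical
  have hnR : (1:ℝ) ≤ (n:ℝ) := by exact_mod_cast hn
  have hnpos : (0:ℝ) < n := by linarith
  set Φ := ∑ i, Real.cosh (lam * d i) with hΦdef
  have hΦpos : 0 < Φ := by linarith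
  set a : Fin n → ℝ := fun i => lam * Real.sinh (lam * d i) with ha
  set t : ℝ := lam / (2 * Real.sqrt n) * Φ with htdef
  have hsqrt : Real.sqrt n > 0 := Real.sqrt_pos.mpr hnpos
  have ht : 0 < t := by
    rw [htdef]
    positivity
  -- rewrite the filter
  have hLeq : ∀ ε : Fin n → Bool,
      lam * ∑ i, Real.sinh (lam * d i) * rsign (ε i) = ∑ i, a i * rsign (ε i) := by
    intro ε
    rw [Finset.mul_sum]
    exact Finset.sum_congr rfl (fun i _ => by rw [ha]; ring)
  have hfilter : (Finset.univ.filter (fun ε : Fin n → Bool =>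
        lam / (2 * Real.sqrt n) * (∑ i, Real.cosh (lam * d i)) ≤
          |lam * ∑ i, Real.sinh (lam * d i) * rsign (ε i)|))
      = (Finset.univ.filter (fun ε : Fin n → Bool => t ≤ |∑ i, a i * rsign (ε i)|)) := by
    apply Finset.filter_congr
    intro ε _
    rw [hLeq ε]
  rw [hfilter]
  -- variance bound
  have htsq : t^2 = lam^2 * Φ^2 / (4 * n) := by
    rw [htdef]
    have h4 : (2 * Real.sqrt n)^2 = 4 * n := by
      rw [mul_pow, Real.sq_sqrt hnpos.le]; norm_num
    rw [div_mul_eq_mul_div, div_pow, mul_pow, mul_pow, Real.sq_sqrt hnpos.le]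
    norm_num
  have hCS : Φ^2 ≤ n * ∑ i, Real.cosh (lam * d i)^2 := by
    have := sq_sum_le_card_mul_sum_sq (s := (Finset.univ : Finset (Fin n)))
      (f := fun i => Real.cosh (lam * d i))
    simpa [hΦdef] using this
  have hsinh : ∑ i, (a i)^2 = lam^2 * ((∑ i, Real.cosh (lam * d i)^2) - n) := by
    rw [ha]
    have : ∀ i : Fin n, (lam * Real.sinh (lam * d i))^2
        = lam^2 * (Real.cosh (lam * d i)^2 - 1) := by
      intro i
      have hc := Real.cosh_sq (lam * d i)
      nlinarith [hc]
    rw [Finset.sum_congr rfl (fun i _ => this i)]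
    rw [← Finset.mul_sum, Finset.sum_sub_distrib]
    simp [Finset.card_univ]
  have hσ : 3 * t^2 ≤ ∑ i, (a i)^2 := by
    rw [htsq, hsinh]
    have hkey : Φ^2 / n - n ≥ 3 * Φ^2 / (4*n) := by
      have h2n : 2*(n:ℝ) ≤ Φ := hΦ
      have hsq : (0:ℝ) ≤ Φ^2 - 4 * n^2 := by nlinarith
      have hdiff : Φ^2/n - n - 3*Φ^2/(4*n) = (Φ^2 - 4*n^2)/(4*n) := by
        field_simp
        ring
      have hdnn : (0:ℝ) ≤ (Φ^2 - 4*n^2)/(4*n) := by positivity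
      linarith
    have hsum_ge : (∑ i, Real.cosh (lam * d i)^2) - n ≥ Φ^2/n - n := by
      have : Φ^2/n ≤ ∑ i, Real.cosh (lam * d i)^2 := by
        rw [div_le_iff₀ hnpos]
        nlinarith [hCS]
      linarith
    have hl2 : (0:ℝ) < lam^2 := by positivity
    calc 3 * (lam^2 * Φ^2 / (4*n)) = lam^2 * (3 * Φ^2 / (4*n)) := by ring
      _ ≤ lam^2 * (Φ^2/n - n) := by nlinarith [hkey]
      _ ≤ lam^2 * ((∑ i, Real.cosh (lam * d i)^2) - n) := by nlinarith [hsum_ge]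
  -- argmax
  have hne : (Finset.univ : Finset (Fin n)).Nonempty := by
    refine ⟨⟨0, hn⟩, Finset.mem_univ _⟩
  obtain ⟨i₀, _, hmax⟩ := Finset.exists_max_image Finset.univ (fun i => |a i|) hne
  -- main inequality
  have hmain : (2^n : ℝ) ≤ 4 * ((Finset.univ.filter
      (fun ε : Fin n → Bool => t ≤ |∑ i, a i * rsign (ε i)|)).card : ℝ) := by
    by_cases hc1 : t ≤ |a i₀|
    · have := flip1 a t i₀ hc1
      have : (2^n : ℝ) ≤ 2 * ((Finset.univ.filter
          (fun ε : Fin n → Bool => t ≤ |∑ i, a i * rsign (ε i)|)).card : ℝ) := by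
        exact_mod_cast this
      have hc : (0:ℝ) ≤ ((Finset.univ.filter
          (fun ε : Fin n → Bool => t ≤ |∑ i, a i * rsign (ε i)|)).card : ℝ) := by positivity
      linarith
    · by_cases hc2 : ∃ j, j ≠ i₀ ∧ t ≤ |a i₀| + |a j|
      · obtain ⟨j, hjne, hj⟩ := hc2
        have := flip2 a t i₀ j hjne hj
        exact_mod_cast this
      · push_neg at hc2
        apply spread a t ht i₀ (not_le.mp hc1)
        · intro j hjne
          have hj := hc2 j hjne
          have hmaxj := hmax j (Finset.mem_univ j)
          linarith
        · exact hσ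
  have hpow : (0:ℝ) < 2^n := by positivity
  rw [ge_iff_le, le_div_iff₀ hpow]
  linarith
end

section
/- Let a_1,...,a_m be reals with |a_i| ≥ 1 for all i, and let Y_1,...,Y_m be independent uniform ±1 random variables. Then for any interval I of length 2, Pr[∑_i a_i Y_i ∈ I] ≤ C(m, ⌊m/2⌋)/2^m. -/
lemma rsign_le {x y : Bool} (h : x = true → y = true) : rsign x ≤ rsign y := by
  cases x <;> cases y <;> simp_all [rsign] <;> norm_num

lemma key_lemma (m : ℕ) (b : Fin m → ℝ) (hb : ∀ i, 1 ≤ b i) (t : ℝ) :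
    (Finset.univ.filter (fun ε : Fin m → Bool =>
        (∑ i, b i * rsign (ε i)) ∈ Set.Ioo t (t + 2))).card ≤ m.choose (m / 2) := by
  classical
  set F := Finset.univ.filter (fun ε : Fin m → Bool =>
        (∑ i, b i * rsign (ε i)) ∈ Set.Ioo t (t + 2)) with hF
  set f : (Fin m → Bool) → Finset (Fin m) := fun ε => Finset.univ.filter (fun i => ε i) with hf
  have hinj : Function.Injective f := by
    intro ε δ h
    funext i
    have := Finset.ext_iff.1 h i
    simp [hf] at this
    cases hεi : ε i <;> cases hδi : δ i <;> simp_all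
  have hcard : F.card = (F.image f).card :=
    (Finset.card_image_of_injective F hinj).symm
  rw [hcard]
  have hanti : IsAntichain (· ⊆ ·) ((F.image f : Finset (Finset (Fin m))) : Set (Finset (Fin m))) := by
    intro x hx y hy hxy hsub
    simp only [Finset.coe_image, Set.mem_image, Finset.mem_coe] at hx hy
    obtain ⟨ε, hε, rfl⟩ := hx
    obtain ⟨δ, hδ, rfl⟩ := hy
    simp only [hF, Finset.mem_filter, Set.mem_Ioo] at hε hδ
    -- find j with δ j = true, ε j = false
    have hne : f ε ≠ f δ := hxy
    have hss : f ε ⊆ f δ := hsub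
    obtain ⟨j, hjδ, hjε⟩ : ∃ j, δ j = true ∧ ε j = false := by
      obtain ⟨j, hj⟩ := Finset.exists_of_ssubset (lt_of_le_of_ne hss hne)
      refine ⟨j, ?_, ?_⟩
      · simpa [hf] using hj.1
      · have := hj.2
        simp [hf] at this
        exact this
    have himp : ∀ i, ε i = true → δ i = true := by
      intro i hi
      have : i ∈ f ε := by simp [hf, hi]
      have := hss this
      simpa [hf] using this
    -- difference of sums ≥ 2
    have hdiff : (2 : ℝ) ≤ (∑ i, b i * rsign (δ i)) - (∑ i, b i * rsign (ε i)) := by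
      rw [← Finset.sum_sub_distrib]
      have hterm : ∀ i ∈ Finset.univ, (0 : ℝ) ≤ b i * rsign (δ i) - b i * rsign (ε i) := by
        intro i _
        have h1 : rsign (ε i) ≤ rsign (δ i) := rsign_le (himp i)
        nlinarith [hb i]
      have hj2 : (2 : ℝ) ≤ b j * rsign (δ j) - b j * rsign (ε j) := by
        simp [rsign, hjδ, hjε]
        nlinarith [hb j]
      calc (2 : ℝ) ≤ b j * rsign (δ j) - b j * rsign (ε j) := hj2
        _ ≤ ∑ i, (b i * rsign (δ i) - b i * rsign (ε i)) :=
          Finset.single_le_sum hterm (Finset.mem_univ j)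
    have := hε.2.1
    have := hδ.2.2
    linarith
  have := IsAntichain.sperner hanti
  simpa using this

/-- Erdős's anti-concentration lemma: if `|a i| ≥ 1` for all `i`, then for any
open interval of length `2`, `Pr[∑ a i Y i ∈ I] ≤ C(m, ⌊m/2⌋)/2^m` for
independent uniform ±1 signs `Y i`. -/
theorem stmt16 (m : ℕ) (a : Fin m → ℝ) (ha : ∀ i, 1 ≤ |a i|) (t : ℝ) :
    (((Finset.univ.filter (fun ε : Fin m → Bool =>
        (∑ i, a i * rsign (ε i)) ∈ Set.Ioo t (t + 2))).card : ℝ) / 2 ^ m) ≤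
      (m.choose (m / 2) : ℝ) / 2 ^ m := by
  classical
  set b : Fin m → ℝ := fun i => |a i| with hb
  set σ : (Fin m → Bool) → (Fin m → Bool) := fun ε i => if 0 ≤ a i then ε i else !(ε i) with hσ
  have hσσ : ∀ ε, σ (σ ε) = ε := by
    intro ε; funext i; simp [hσ]; split <;> simp
  have hsum : ∀ ε, (∑ i, a i * rsign (ε i)) = ∑ i, b i * rsign (σ ε i) := by
    intro ε
    apply Finset.sum_congr rfl
    intro i _
    by_cases h : 0 ≤ a i
    · simp [hσ, hb, h, abs_of_nonneg h]
    · have : a i < 0 := lt_of_not_ge h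
      cases hεi : ε i <;> simp [hσ, hb, h, abs_of_neg this, rsign, hεi] <;> ring
  have hcardeq : (Finset.univ.filter (fun ε : Fin m → Bool =>
        (∑ i, a i * rsign (ε i)) ∈ Set.Ioo t (t + 2))).card
      = (Finset.univ.filter (fun ε : Fin m → Bool =>
        (∑ i, b i * rsign (ε i)) ∈ Set.Ioo t (t + 2))).card := by
    apply Finset.card_bij' (fun ε _ => σ ε) (fun ε _ => σ ε)
    · intro ε hε
      simp only [Finset.mem_filter, Finset.mem_univ, true_and] at hε ⊢
      rwa [← hsum]
    · intro ε hε
      simp only [Finset.mem_filter, Finset.mem_univ, true_and] at hε ⊢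
      rw [hsum (σ ε), hσσ]
      exact hε
    · intro ε _; exact hσσ ε
    · intro ε _; exact hσσ ε
  rw [hcardeq]
  gcongr
  exact_mod_cast key_lemma m b (fun i => ha i) t
end
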